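/- Let $k$ be a natural number, $y \ge 2$, and let $a(p)$ be complex numbers indexed by primes. The number of $2k$-tuples of primes $(p_1,\dots,p_{2k})$ with each $p_i \le y$ and $p_1 \cdots p_{2k}$ a perfect square satisfies $\sum_{\substack{p_1,\dots,p_{2k} \le y \\ p_1\cdots p_{2k} = \square}} \frac{|a(p_1) \cdots a(p_{2k})|}{\sqrt{p_1 \cdots p_{2k}}} \le \frac{(2k)!}{k! 2^k} \left(\sum_{p \le y} \frac{|a(p)|^2}{p}\right)^k$. -/

import Mathlib

open Finset
open scoped Classical

lemma sqrt_prod' {ι : Type*} (s : Finset ι) (g : ι → ℝ) (hg : ∀ i ∈ s, 0 ≤ g i) :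
    Real.sqrt (∏ i ∈ s, g i) = ∏ i ∈ s, Real.sqrt (g i) := by
  induction s using Finset.induction with
  | empty => simp
  | @insert x s hx ih =>
    rw [Finset.prod_insert hx, Finset.prod_insert hx,
      Real.sqrt_mul (hg x (mem_insert_self _ _)), ih fun i hi => hg i (mem_insert_of_mem hi)]

lemma isSquare_of_sq_mul {a b : ℕ} (ha : a ≠ 0) (h : IsSquare (a ^ 2 * b)) : IsSquare b := by
  obtain ⟨c, hc⟩ := h
  have hdvd : a ∣ c := by
    have : a ^ 2 ∣ c ^ 2 := ⟨b, by rw [sq c, ← hc]⟩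
    exact (Nat.pow_dvd_pow_iff (by norm_num)).mp this
  obtain ⟨d, rfl⟩ := hdvd
  refine ⟨d, ?_⟩
  have : a ^ 2 * b = a ^ 2 * (d * d) := by rw [hc]; ring
  exact Nat.eq_of_mul_eq_mul_left (Nat.pos_of_ne_zero (pow_ne_zero 2 ha)) this

lemma key_bound (P : Finset ℕ) (hP : ∀ p ∈ P, Nat.Prime p) (f : ℕ → ℝ)
    (hf : ∀ p, 0 ≤ f p) (k : ℕ) :
    ∑ ps ∈ (Fintype.piFinset fun _ : Fin (2 * k) => P).filter
        (fun ps => IsSquare (∏ i, ps i)), ∏ i, f (ps i) ≤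
    ((2 * k).factorial : ℝ) / (k.factorial * 2 ^ k) * (∑ p ∈ P, f p ^ 2) ^ k := by
  induction k with
  | zero => simp
  | succ k ih =>
    set S := ∑ p ∈ P, f p ^ 2 with hSdef
    have hS0 : 0 ≤ S := Finset.sum_nonneg fun p _ => sq_nonneg _
    set Sq2 := (Fintype.piFinset fun _ : Fin (2 * k) => P).filter
        (fun ps => IsSquare (∏ i, ps i)) with hSq2
    set Src := (Fintype.piFinset fun _ : Fin (2 * (k + 1)) => P).filter
        (fun ps => IsSquare (∏ i, ps i)) with hSrc
    -- existence of an earlier index matching the last one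
    have hex : ∀ ps ∈ Src, ∃ j : Fin (2 * k + 1),
        ps (Fin.castSucc j) = ps (Fin.last (2 * k + 1)) := by
      intro ps hps
      rw [hSrc, Finset.mem_filter] at hps
      obtain ⟨hmem, hsq⟩ := hps
      have hmem' : ∀ i, ps i ∈ P := fun i => (Fintype.mem_piFinset.mp hmem) i
      have hp : (ps (Fin.last (2 * k + 1))).Prime := hP _ (hmem' _)
      obtain ⟨c, hc⟩ := hsq
      have hpc : ps (Fin.last (2 * k + 1)) ∣ c := by
        have hdvd : ps (Fin.last (2 * k + 1)) ∣ c * c := by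
          rw [← hc]; exact Finset.dvd_prod_of_mem _ (Finset.mem_univ _)
        rcases (Nat.Prime.dvd_mul hp).mp hdvd with h | h <;> exact h
      obtain ⟨d, rfl⟩ := hpc
      have e1 : ∏ i, ps i
          = (∏ i : Fin (2 * k + 1), ps (Fin.castSucc i)) * ps (Fin.last (2 * k + 1)) :=
        Fin.prod_univ_castSucc (fun i => ps i)
      have hProd : (∏ i : Fin (2 * k + 1), ps (Fin.castSucc i)) * ps (Fin.last (2 * k + 1))
          = (ps (Fin.last (2 * k + 1)) * (d * d)) * ps (Fin.last (2 * k + 1)) := by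
        rw [← e1, hc]; ring
      have hR : (∏ i : Fin (2 * k + 1), ps (Fin.castSucc i))
          = ps (Fin.last (2 * k + 1)) * (d * d) :=
        Nat.eq_of_mul_eq_mul_right hp.pos hProd
      have hdvdR : ps (Fin.last (2 * k + 1)) ∣ ∏ i : Fin (2 * k + 1), ps (Fin.castSucc i) :=
        ⟨d * d, hR⟩
      obtain ⟨j, _, hj⟩ := hp.prime.exists_mem_finset_dvd hdvdR
      exact ⟨j, ((Nat.prime_dvd_prime_iff_eq hp (hP _ (hmem' _))).mp hj).symm⟩
    classical
    set Φ : (Fin (2 * (k + 1)) → ℕ) → (Fin (2 * k + 1) × ℕ × (Fin (2 * k) → ℕ)) :=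
      fun ps => if h : ∃ j : Fin (2 * k + 1),
          ps (Fin.castSucc j) = ps (Fin.last (2 * k + 1)) then
        (h.choose, ps (Fin.last (2 * k + 1)),
          fun i => ps (Fin.castSucc (h.choose.succAbove i)))
      else (0, 0, fun _ => 0) with hΦdef
    have hΦ : ∀ ps (h : ∃ j : Fin (2 * k + 1),
        ps (Fin.castSucc j) = ps (Fin.last (2 * k + 1))),
        Φ ps = (h.choose, ps (Fin.last (2 * k + 1)),
          fun i => ps (Fin.castSucc (h.choose.succAbove i))) := by
      intro ps h
      rw [hΦdef]
      exact dif_pos h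
    set w : Fin (2 * k + 1) × ℕ × (Fin (2 * k) → ℕ) → ℝ :=
      fun x => f x.2.1 ^ 2 * ∏ i, f (x.2.2 i) with hwdef
    set T : Finset (Fin (2 * k + 1) × ℕ × (Fin (2 * k) → ℕ)) :=
      Finset.univ ×ˢ (P ×ˢ Sq2) with hT
    have hterm : ∀ ps ∈ Src, ∏ i, f (ps i) = w (Φ ps) := by
      intro ps hps
      have h := hex ps hps
      rw [hΦ ps h, hwdef]
      simp only
      have e1 : ∏ i, f (ps i)
          = (∏ i : Fin (2 * k + 1), f (ps (Fin.castSucc i))) * f (ps (Fin.last (2 * k + 1))) :=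
        Fin.prod_univ_castSucc (fun i => f (ps i))
      have e2 : ∏ i : Fin (2 * k + 1), f (ps (Fin.castSucc i))
          = f (ps (Fin.castSucc h.choose))
            * ∏ i : Fin (2 * k), f (ps (Fin.castSucc (h.choose.succAbove i))) :=
        Fin.prod_univ_succAbove (fun i => f (ps (Fin.castSucc i))) h.choose
      rw [e1, e2, h.choose_spec]
      ring
    have hmaps : ∀ ps ∈ Src, Φ ps ∈ T := by
      intro ps hps
      have h := hex ps hps
      have hpsrc := hps
      rw [hSrc, Finset.mem_filter] at hpsrc
      obtain ⟨hmem, hsq⟩ := hpsrc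
      have hmem' : ∀ i, ps i ∈ P := fun i => (Fintype.mem_piFinset.mp hmem) i
      rw [hΦ ps h, hT]
      refine Finset.mem_product.mpr ⟨Finset.mem_univ _, Finset.mem_product.mpr ⟨hmem' _, ?_⟩⟩
      rw [hSq2, Finset.mem_filter]
      refine ⟨Fintype.mem_piFinset.mpr fun i => hmem' _, ?_⟩
      have e1 : ∏ i, ps i
          = (∏ i : Fin (2 * k + 1), ps (Fin.castSucc i)) * ps (Fin.last (2 * k + 1)) :=
        Fin.prod_univ_castSucc (fun i => ps i)
      have e2 : ∏ i : Fin (2 * k + 1), ps (Fin.castSucc i)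
          = ps (Fin.castSucc h.choose)
            * ∏ i : Fin (2 * k), ps (Fin.castSucc (h.choose.succAbove i)) :=
        Fin.prod_univ_succAbove (fun i => ps (Fin.castSucc i)) h.choose
      have key : ∏ i, ps i = ps (Fin.last (2 * k + 1)) ^ 2
          * ∏ i : Fin (2 * k), ps (Fin.castSucc (h.choose.succAbove i)) := by
        rw [e1, e2, h.choose_spec]; ring
      rw [key] at hsq
      exact isSquare_of_sq_mul (hP _ (hmem' _)).pos.ne' hsq
    have hinj : ∀ ps ∈ Src, ∀ ps' ∈ Src, Φ ps = Φ ps' → ps = ps' := by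
      intro ps hps ps' hps' heq
      have h := hex ps hps
      have h' := hex ps' hps'
      rw [hΦ ps h, hΦ ps' h'] at heq
      simp only [Prod.mk.injEq] at heq
      obtain ⟨hj, hlast, hqs⟩ := heq
      funext i
      rcases Fin.eq_castSucc_or_eq_last i with ⟨m, rfl⟩ | rfl
      · by_cases hm : m = h.choose
        · calc ps (Fin.castSucc m) = ps (Fin.last (2 * k + 1)) := by
                rw [hm]; exact h.choose_spec
            _ = ps' (Fin.last (2 * k + 1)) := hlast
            _ = ps' (Fin.castSucc m) := by rw [hm, hj]; exact h'.choose_spec.symm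
        · obtain ⟨i', hi'⟩ := Fin.exists_succAbove_eq hm
          have := congrFun hqs i'
          rw [← hi', this, hj]
      · exact hlast
    have hsub : Src.image Φ ⊆ T := by
      intro x hx
      obtain ⟨ps, hps, rfl⟩ := Finset.mem_image.mp hx
      exact hmaps ps hps
    have hw0 : ∀ x, 0 ≤ w x := by
      intro x
      exact mul_nonneg (sq_nonneg _) (Finset.prod_nonneg fun i _ => hf _)
    have hTsum : ∑ x ∈ T, w x = (2 * k + 1 : ℝ) * (S * ∑ qs ∈ Sq2, ∏ i, f (qs i)) := by
      rw [hT, Finset.sum_product]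
      have inner : ∀ j : Fin (2 * k + 1),
          ∑ y ∈ P ×ˢ Sq2, w (j, y) = S * ∑ qs ∈ Sq2, ∏ i, f (qs i) := by
        intro j
        rw [Finset.sum_product, hSdef, Finset.sum_mul_sum]
      rw [Finset.sum_congr rfl fun j _ => inner j, Finset.sum_const, Finset.card_univ,
        Fintype.card_fin, nsmul_eq_mul]
      push_cast
      ring
    have step1 : ∑ ps ∈ Src, ∏ i, f (ps i) ≤ ∑ x ∈ T, w x := by
      rw [Finset.sum_congr rfl hterm, ← Finset.sum_image hinj]
      exact Finset.sum_le_sum_of_subset_of_nonneg hsub fun x _ _ => hw0 x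
    have step2 : ∑ x ∈ T, w x ≤ (2 * k + 1 : ℝ)
        * (S * (((2 * k).factorial : ℝ) / (k.factorial * 2 ^ k) * S ^ k)) := by
      rw [hTsum]
      gcongr
    refine le_trans (le_trans step1 step2) (le_of_eq ?_)
    have hfac : ((2 * (k + 1)).factorial : ℝ) = (2 * k + 2) * ((2 * k + 1) * (2 * k).factorial) := by
      rw [show 2 * (k + 1) = 2 * k + 1 + 1 by ring, Nat.factorial_succ, Nat.factorial_succ]
      push_cast
      ring
    have hfac2 : (((k + 1).factorial : ℝ)) = (k + 1) * k.factorial := by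
      rw [Nat.factorial_succ]; push_cast; ring
    rw [hfac, hfac2]
    have hk0 : (k.factorial : ℝ) ≠ 0 := Nat.cast_ne_zero.mpr k.factorial_ne_zero
    have h20 : (2 : ℝ) ^ k ≠ 0 := pow_ne_zero _ two_ne_zero
    have hk10 : (k : ℝ) + 1 ≠ 0 := by positivity
    field_simp
    ring


theorem square_tuple_sum_bound (k : ℕ) (y : ℝ) (hy : 2 ≤ y) (a : ℕ → ℂ) :
    ∑ ps ∈ (Fintype.piFinset fun _ : Fin (2 * k) =>
        (Finset.range (⌊y⌋₊ + 1)).filter fun p : ℕ => p.Prime ∧ (p : ℝ) ≤ y).filter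
        (fun ps => IsSquare (∏ i, ps i)),
      (∏ i, ‖a (ps i)‖) / Real.sqrt (∏ i, (ps i : ℝ)) ≤
    ((2 * k).factorial : ℝ) / (k.factorial * 2 ^ k) *
      (∑ p ∈ (Finset.range (⌊y⌋₊ + 1)).filter (fun p : ℕ => p.Prime ∧ (p : ℝ) ≤ y),
        ‖a p‖ ^ 2 / (p : ℝ)) ^ k := by
  set P := (Finset.range (⌊y⌋₊ + 1)).filter (fun p : ℕ => p.Prime ∧ (p : ℝ) ≤ y) with hPdef
  have hP : ∀ p ∈ P, Nat.Prime p := fun p hp => ((Finset.mem_filter.mp hp).2).1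
  set f : ℕ → ℝ := fun p => ‖a p‖ / Real.sqrt p with hfdef
  have hf : ∀ p, 0 ≤ f p := fun p => div_nonneg (norm_nonneg _) (Real.sqrt_nonneg _)
  have h1 : ∀ ps ∈ (Fintype.piFinset fun _ : Fin (2 * k) => P).filter
      (fun ps => IsSquare (∏ i, ps i)),
      (∏ i, ‖a (ps i)‖) / Real.sqrt (∏ i, (ps i : ℝ)) = ∏ i, f (ps i) := by
    intro ps _
    rw [sqrt_prod' _ _ (fun i _ => Nat.cast_nonneg _), ← Finset.prod_div_distrib]
  have h2 : ∀ p ∈ P, ‖a p‖ ^ 2 / (p : ℝ) = f p ^ 2 := by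
    intro p hp
    rw [hfdef]
    simp only [div_pow, Real.sq_sqrt (Nat.cast_nonneg p)]
  rw [Finset.sum_congr rfl h1, Finset.sum_congr rfl h2]
  exact key_bound P hP f hf k
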